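/- Let $X_1,\dots,X_n$ be exchangeable $\{0,1\}$-valued random variables and $l \ge n$. Then $(X_1,\dots,X_n)$ extends to an exchangeable sequence $(Y_1,\dots,Y_l)$ of $\{0,1\}$-valued random variables if and only if there exists a $\{0,1,\dots,l\}$-valued random variable $N$ such that for all $1 \le k \le n$, $P(X_1=1,\dots,X_k=1) = E[N(N-1)\cdots(N-k+1)]/(l(l-1)\cdots(l-k+1))$. -/

import Mathlib

open MeasureTheory

namespace DFX

open Finset
open scoped ENNReal

/-! ### Counting ones -/

def ones {m : ℕ} (f : Fin m → Bool) : ℕ := #(Finset.univ.filter (fun i => f i = true))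

lemma ones_le {m : ℕ} (f : Fin m → Bool) : ones f ≤ m :=
  le_trans (Finset.card_filter_le _ _) (by simp)

lemma ones_comp_perm {m : ℕ} (f : Fin m → Bool) (π : Equiv.Perm (Fin m)) :
    ones (f ∘ π) = ones f := by
  unfold ones
  apply Finset.card_bij (fun i _ => π i)
  · intro a ha; simp_all
  · intro a ha b hb h; exact π.injective h
  · intro b hb; exact ⟨π.symm b, by simp_all⟩

def theOnes (m k : ℕ) : Fin m → Bool := fun i => decide ((i : ℕ) < k)

def Aset (m k : ℕ) : Set (Fin m → Bool) := {f | ∀ i : Fin m, (i : ℕ) < k → f i = true}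

lemma card_init {m k : ℕ} (hk : k ≤ m) :
    #(Finset.univ.filter (fun i : Fin m => (i : ℕ) < k)) = k := by
  have : (Finset.univ.filter (fun i : Fin m => (i : ℕ) < k))
      = Finset.map (Fin.castLEEmb hk) Finset.univ := by
    ext j
    simp only [Finset.mem_filter, Finset.mem_univ, true_and,
      Finset.mem_map, Fin.castLEEmb]
    constructor
    · intro h; exact ⟨⟨j, h⟩, by simp⟩
    · rintro ⟨i, -, rfl⟩; simp [i.isLt]
  rw [this]; simp

lemma ones_theOnes {m k : ℕ} (hk : k ≤ m) : ones (theOnes m k) = k := by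
  unfold ones theOnes
  rw [show (Finset.univ.filter fun i : Fin m => decide ((i : ℕ) < k) = true)
      = Finset.univ.filter (fun i : Fin m => (i : ℕ) < k) from by ext j; simp,
    card_init hk]

lemma exists_perm_of_ones_eq {m : ℕ} {f g : Fin m → Bool} (h : ones f = ones g) :
    ∃ π : Equiv.Perm (Fin m), g = f ∘ π := by
  have hcard : Fintype.card {i : Fin m // g i = true} = Fintype.card {i : Fin m // f i = true} := by
    simp only [Fintype.card_subtype]
    exact h.symm
  refine ⟨(Fintype.equivOfCardEq hcard).extendSubtype, funext fun i => ?_⟩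
  by_cases hi : g i = true
  · have := Equiv.extendSubtype_mem (Fintype.equivOfCardEq hcard) i hi
    simp [hi, Function.comp, this]
  · have := Equiv.extendSubtype_not_mem (Fintype.equivOfCardEq hcard) i hi
    simp only [Function.comp]
    rw [Bool.not_eq_true] at hi this
    rw [hi, this]

lemma mem_Aset_iff {m k : ℕ} (f : Fin m → Bool) :
    f ∈ Aset m k ↔ Finset.univ.filter (fun i : Fin m => (i : ℕ) < k)
      ⊆ Finset.univ.filter (fun i => f i = true) := by
  simp [Aset, Finset.subset_iff]

lemma ones_ge_of_mem_Aset {m k : ℕ} (hk : k ≤ m) {f : Fin m → Bool} (hf : f ∈ Aset m k) :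
    k ≤ ones f :=
  calc k = _ := (card_init hk).symm
    _ ≤ ones f := Finset.card_le_card ((mem_Aset_iff f).1 hf)

lemma eq_theOnes_of_mem_Aset {m k : ℕ} (hk : k ≤ m) {f : Fin m → Bool}
    (hf : f ∈ Aset m k) (ho : ones f = k) : f = theOnes m k := by
  have heq : Finset.univ.filter (fun i : Fin m => (i : ℕ) < k)
      = Finset.univ.filter (fun i => f i = true) :=
    Finset.eq_of_subset_of_card_le ((mem_Aset_iff f).1 hf)
      (by rw [card_init hk]; exact le_of_eq ho)
  funext i
  have hiff : f i = true ↔ (i : ℕ) < k := by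
    constructor
    · intro h
      have : i ∈ Finset.univ.filter (fun i : Fin m => (i : ℕ) < k) := by
        rw [heq]; simp [h]
      simpa using this
    · intro h
      have : i ∈ Finset.univ.filter (fun i => f i = true) := by
        rw [← heq]; simp [h]
      simpa using this
  unfold theOnes
  by_cases h : (i : ℕ) < k
  · simp [h, hiff.2 h]
  · rw [decide_eq_false h]
    exact Bool.not_eq_true _ |>.mp (fun hc => h (hiff.1 hc))

/-! ### Basic measure lemmas -/

lemma meas_finset_sum {α : Type*} [MeasurableSpace α] [MeasurableSingletonClass α]
    (μ : Measure α) (s : Finset α) : μ ↑s = ∑ f ∈ s, μ {f} := by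
  have := sum_measure_preimage_singleton (μ := μ) (f := id) s
    (fun y _ => MeasurableSet.singleton y)
  simpa using this.symm

lemma singleton_comp_perm {m : ℕ} (μ : Measure (Fin m → Bool))
    (hexch : ∀ π : Equiv.Perm (Fin m), Measure.map (fun f => f ∘ π) μ = μ)
    (f : Fin m → Bool) (π : Equiv.Perm (Fin m)) : μ {f ∘ π} = μ {f} := by
  conv_rhs => rw [← hexch π.symm]
  rw [Measure.map_apply (measurable_of_countable _) (MeasurableSet.singleton f)]
  congr 1
  ext g
  simp only [Set.mem_preimage, Set.mem_singleton_iff]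
  constructor
  · rintro rfl; funext i; simp
  · rintro rfl; funext i; simp

lemma singleton_eq_of_ones {m : ℕ} (μ : Measure (Fin m → Bool))
    (hexch : ∀ π : Equiv.Perm (Fin m), Measure.map (fun f => f ∘ π) μ = μ)
    {f g : Fin m → Bool} (h : ones f = ones g) : μ {f} = μ {g} := by
  obtain ⟨π, rfl⟩ := exists_perm_of_ones_eq h
  exact (singleton_comp_perm μ hexch f π).symm

/-! ### Uniqueness of exchangeable measures with given head probabilities -/

def AF (m k : ℕ) : Finset (Fin m → Bool) :=
  Finset.univ.filter (fun f => ∀ i : Fin m, (i : ℕ) < k → f i = true)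

lemma coe_AF (m k : ℕ) : ↑(AF m k) = Aset m k := by
  ext f; simp [AF, Aset]

lemma mem_AF {m k : ℕ} {f : Fin m → Bool} : f ∈ AF m k ↔ f ∈ Aset m k := by
  simp [AF, Aset]

lemma theOnes_mem_AF (m k : ℕ) : theOnes m k ∈ AF m k := by
  simp [AF, theOnes]

lemma exch_unique {m : ℕ} (μ₁ μ₂ : Measure (Fin m → Bool)) [IsProbabilityMeasure μ₁]
    [IsProbabilityMeasure μ₂]
    (h₁ : ∀ π : Equiv.Perm (Fin m), Measure.map (fun f => f ∘ π) μ₁ = μ₁)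
    (h₂ : ∀ π : Equiv.Perm (Fin m), Measure.map (fun f => f ∘ π) μ₂ = μ₂)
    (h : ∀ k, k ≤ m → μ₁ (Aset m k) = μ₂ (Aset m k)) : μ₁ = μ₂ := by
  have key : ∀ d k, k ≤ m → m - k ≤ d → μ₁ {theOnes m k} = μ₂ {theOnes m k} := by
    intro d
    induction d using Nat.strong_induction_on with
    | _ d ih =>
      intro k hk hd
      have hdecomp : ∀ (μ : Measure (Fin m → Bool)),
          μ (Aset m k) = μ {theOnes m k} + ∑ f ∈ (AF m k).erase (theOnes m k), μ {f} := by
        intro μ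
        rw [← coe_AF, meas_finset_sum,
          ← Finset.add_sum_erase _ _ (theOnes_mem_AF m k)]
      have hterm : ∀ f ∈ (AF m k).erase (theOnes m k), μ₁ {f} = μ₂ {f} := by
        intro f hf
        obtain ⟨hne, hfA⟩ := Finset.mem_erase.1 hf
        have hfA' := mem_AF.1 hfA
        have h1 : k ≤ ones f := ones_ge_of_mem_Aset hk hfA'
        have h2 : ones f ≠ k := fun hc => hne (eq_theOnes_of_mem_Aset hk hfA' hc)
        have h3 : ones f ≤ m := ones_le f
        have hlt : m - ones f < d := by omega
        have e1 : μ₁ {f} = μ₁ {theOnes m (ones f)} :=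
          singleton_eq_of_ones μ₁ h₁ ((ones_theOnes h3).symm ▸ rfl)
        have e2 : μ₂ {f} = μ₂ {theOnes m (ones f)} :=
          singleton_eq_of_ones μ₂ h₂ ((ones_theOnes h3).symm ▸ rfl)
        rw [e1, e2]
        exact ih _ hlt (ones f) h3 (le_refl _)
      have hS : (∑ f ∈ (AF m k).erase (theOnes m k), μ₁ {f}) ≠ ⊤ := by
        refine (ENNReal.sum_lt_top.2 fun f _ => ?_).ne
        exact measure_lt_top μ₁ _
      have heq : μ₁ {theOnes m k} + ∑ f ∈ (AF m k).erase (theOnes m k), μ₁ {f}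
          = μ₂ {theOnes m k} + ∑ f ∈ (AF m k).erase (theOnes m k), μ₁ {f} := by
        conv_rhs => rw [Finset.sum_congr rfl hterm]
        rw [← hdecomp μ₁, ← hdecomp μ₂, h k hk]
      rw [add_comm (μ₁ {theOnes m k}), add_comm (μ₂ {theOnes m k})] at heq
      exact (ENNReal.add_right_inj hS).mp heq
  rw [Measure.ext_iff_singleton]
  intro f
  have h3 : ones f ≤ m := ones_le f
  have e1 : μ₁ {f} = μ₁ {theOnes m (ones f)} :=
    singleton_eq_of_ones μ₁ h₁ ((ones_theOnes h3).symm ▸ rfl)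
  have e2 : μ₂ {f} = μ₂ {theOnes m (ones f)} :=
    singleton_eq_of_ones μ₂ h₂ ((ones_theOnes h3).symm ▸ rfl)
  rw [e1, e2]
  exact key m (ones f) h3 (Nat.sub_le _ _)

/-! ### The factorial-moment identity for exchangeable measures -/

lemma count_emb (k : ℕ) {l : ℕ} (f : Fin l → Bool) :
    #(Finset.univ.filter (fun σ : Fin k ↪ Fin l => ∀ j, f (σ j) = true))
      = (ones f).descFactorial k := by
  have e : {σ : Fin k ↪ Fin l // ∀ j, f (σ j) = true} ≃ (Fin k ↪ {i : Fin l // f i = true}) :=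
    { toFun := fun σ => ⟨fun j => ⟨σ.1 j, σ.2 j⟩,
        fun a b hab => σ.1.injective (congrArg Subtype.val hab)⟩
      invFun := fun τ => ⟨⟨fun j => (τ j).1,
        fun a b hab => τ.injective (Subtype.ext hab)⟩, fun j => (τ j).2⟩
      left_inv := fun σ => Subtype.ext (DFunLike.ext _ _ fun j => rfl)
      right_inv := fun τ => DFunLike.ext _ _ fun j => Subtype.ext rfl }
  calc #(Finset.univ.filter (fun σ : Fin k ↪ Fin l => ∀ j, f (σ j) = true))
      = Fintype.card {σ : Fin k ↪ Fin l // ∀ j, f (σ j) = true} :=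
        (Fintype.card_subtype _).symm
    _ = Fintype.card (Fin k ↪ {i : Fin l // f i = true}) := Fintype.card_congr e
    _ = (Fintype.card {i : Fin l // f i = true}).descFactorial (Fintype.card (Fin k)) :=
        Fintype.card_embedding_eq
    _ = (ones f).descFactorial k := by rw [Fintype.card_subtype, Fintype.card_fin]; rfl

lemma meas_Aemb {l : ℕ} (ν : Measure (Fin l → Bool))
    (hexch : ∀ π : Equiv.Perm (Fin l), Measure.map (fun f => f ∘ π) ν = ν)
    {k : ℕ} (hk : k ≤ l) (σ : Fin k ↪ Fin l) :
    ν {f | ∀ j, f (σ j) = true} = ν (Aset l k) := by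
  classical
  set σ₀ : Fin k ↪ Fin l := Fin.castLEEmb hk with hσ₀
  set e : {x : Fin l // x ∈ Set.range ⇑σ₀} ≃ {x : Fin l // x ∈ Set.range ⇑σ} :=
    (Equiv.ofInjective σ₀ σ₀.injective).symm.trans (Equiv.ofInjective σ σ.injective) with he
  set π : Equiv.Perm (Fin l) := e.extendSubtype with hπdef
  have hπ : ∀ j, π (σ₀ j) = σ j := by
    intro j
    have h1 : π (σ₀ j) = ↑(e ⟨σ₀ j, ⟨j, rfl⟩⟩) :=
      Equiv.extendSubtype_apply_of_mem e (σ₀ j) ⟨j, rfl⟩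
    have h2 : (⟨σ₀ j, ⟨j, rfl⟩⟩ : {x : Fin l // x ∈ Set.range ⇑σ₀})
        = Equiv.ofInjective σ₀ σ₀.injective j := rfl
    rw [h1, h2, he]
    simp
  have hset : {f : Fin l → Bool | ∀ j, f (σ j) = true} = (fun f => f ∘ π) ⁻¹' (Aset l k) := by
    ext f
    simp only [Set.mem_setOf_eq, Set.mem_preimage, Aset, Function.comp]
    constructor
    · intro h i hi
      have : σ₀ ⟨(i : ℕ), hi⟩ = i := by
        simp [hσ₀, Fin.ext_iff]
      rw [← this, hπ]
      exact h _
    · intro h j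
      have hlt : ((σ₀ j : Fin l) : ℕ) < k := by simp [hσ₀, j.isLt]
      have := h (σ₀ j) hlt
      rwa [hπ] at this
  rw [hset, ← Measure.map_apply (measurable_of_countable _) (Set.toFinite _).measurableSet,
    hexch π]

lemma moment_eq {l : ℕ} (ν : Measure (Fin l → Bool))
    (hexch : ∀ π : Equiv.Perm (Fin l), Measure.map (fun f => f ∘ π) ν = ν)
    {k : ℕ} (hk : k ≤ l) :
    ν (Aset l k) * (l.descFactorial k : ℝ≥0∞)
      = ∑ f : Fin l → Bool, ν {f} * ((ones f).descFactorial k : ℝ≥0∞) := by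
  classical
  have hcard : Fintype.card (Fin k ↪ Fin l) = l.descFactorial k := by
    rw [Fintype.card_embedding_eq, Fintype.card_fin, Fintype.card_fin]
  have step1 : ν (Aset l k) * (l.descFactorial k : ℝ≥0∞)
      = ∑ σ : Fin k ↪ Fin l, ν {f | ∀ j, f (σ j) = true} := by
    rw [Finset.sum_congr rfl (fun σ _ => meas_Aemb ν hexch hk σ), Finset.sum_const,
      Finset.card_univ, hcard, nsmul_eq_mul, mul_comm]
  rw [step1]
  have step2 : ∀ σ : Fin k ↪ Fin l, ν {f | ∀ j, f (σ j) = true}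
      = ∑ f : Fin l → Bool, if (∀ j, f (σ j) = true) then ν {f} else 0 := by
    intro σ
    rw [← Finset.sum_filter]
    have : {f : Fin l → Bool | ∀ j, f (σ j) = true}
        = ↑(Finset.univ.filter (fun f : Fin l → Bool => ∀ j, f (σ j) = true)) := by
      ext f; simp
    rw [this, meas_finset_sum]
  rw [Finset.sum_congr rfl (fun σ _ => step2 σ), Finset.sum_comm]
  refine Finset.sum_congr rfl fun f _ => ?_
  rw [← Finset.sum_filter, Finset.sum_const, nsmul_eq_mul, count_emb k f, mul_comm]

lemma moment_group {l : ℕ} (ν : Measure (Fin l → Bool))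
    (hexch : ∀ π : Equiv.Perm (Fin l), Measure.map (fun f => f ∘ π) ν = ν)
    {k : ℕ} (hk : k ≤ l) :
    ν (Aset l k) * (l.descFactorial k : ℝ≥0∞)
      = ∑ m' ∈ Finset.range (l + 1),
          ν {f : Fin l → Bool | ones f = m'} * (m'.descFactorial k : ℝ≥0∞) := by
  classical
  rw [moment_eq ν hexch hk]
  rw [← Finset.sum_fiberwise_of_maps_to (g := fun f : Fin l → Bool => ones f)
    (fun f _ => Finset.mem_range.2 (Nat.lt_succ_of_le (ones_le f)))]
  refine Finset.sum_congr rfl fun m' _ => ?_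
  have : ∀ f ∈ Finset.univ.filter (fun f : Fin l → Bool => ones f = m'),
      ν {f} * ((ones f).descFactorial k : ℝ≥0∞) = ν {f} * (m'.descFactorial k : ℝ≥0∞) := by
    intro f hf
    rw [(Finset.mem_filter.1 hf).2]
  rw [Finset.sum_congr rfl this, ← Finset.sum_mul]
  congr 1
  have : {f : Fin l → Bool | ones f = m'}
      = ↑(Finset.univ.filter (fun f : Fin l → Bool => ones f = m')) := by
    ext f; simp
  rw [this, meas_finset_sum]

/-! ### Level set counting and permutation extension -/

lemma card_ones_level (l m' : ℕ) :
    #(Finset.univ.filter (fun f : Fin l → Bool => ones f = m')) = l.choose m' := by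
  classical
  have : #(Finset.univ.filter (fun f : Fin l → Bool => ones f = m'))
      = #(Finset.powersetCard m' (Finset.univ : Finset (Fin l))) := by
    apply Finset.card_bij (fun f _ => Finset.univ.filter (fun i => f i = true))
    · intro f hf
      rw [Finset.mem_powersetCard]
      exact ⟨Finset.subset_univ _, (Finset.mem_filter.1 hf).2⟩
    · intro f hf g hg h
      funext i
      have : (f i = true) ↔ (g i = true) := by
        constructor
        · intro hi
          have : i ∈ Finset.univ.filter (fun i => g i = true) := h ▸ (by simp [hi])
          simpa using this
        · intro hi
          have : i ∈ Finset.univ.filter (fun i => f i = true) := h.symm ▸ (by simp [hi])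
          simpa using this
      cases hf' : f i <;> cases hg' : g i <;> simp_all
    · intro s hs
      rw [Finset.mem_powersetCard] at hs
      refine ⟨fun i => decide (i ∈ s), ?_, ?_⟩
      · simp only [Finset.mem_filter, Finset.mem_univ, true_and]
        rw [← hs.2]
        unfold ones
        congr 1
        ext i; simp
      · ext i; simp
  rw [this, Finset.card_powersetCard, Finset.card_univ, Fintype.card_fin]

def permExt {n l : ℕ} (hnl : n ≤ l) (π : Equiv.Perm (Fin n)) : Equiv.Perm (Fin l) where
  toFun j := if h : (j : ℕ) < n then Fin.castLE hnl (π ⟨j, h⟩) else j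
  invFun j := if h : (j : ℕ) < n then Fin.castLE hnl (π.symm ⟨j, h⟩) else j
  left_inv j := by
    by_cases h : (j : ℕ) < n
    · simp only [h, dif_pos]
      have h2 : ((Fin.castLE hnl (π ⟨j, h⟩) : Fin l) : ℕ) < n := (π ⟨j, h⟩).isLt
      rw [dif_pos h2]
      have : (⟨(Fin.castLE hnl (π ⟨j, h⟩) : Fin l), h2⟩ : Fin n) = π ⟨j, h⟩ := by
        apply Fin.ext; simp
      rw [this, Equiv.symm_apply_apply]
      apply Fin.ext; simp
    · show (if h : ((if h : (j:ℕ) < n then _ else j : Fin l) : ℕ) < n then _ else _) = j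
      simp only [dif_neg h]
  right_inv j := by
    by_cases h : (j : ℕ) < n
    · simp only [h, dif_pos]
      have h2 : ((Fin.castLE hnl (π.symm ⟨j, h⟩) : Fin l) : ℕ) < n := (π.symm ⟨j, h⟩).isLt
      rw [dif_pos h2]
      have : (⟨(Fin.castLE hnl (π.symm ⟨j, h⟩) : Fin l), h2⟩ : Fin n) = π.symm ⟨j, h⟩ := by
        apply Fin.ext; simp
      rw [this, Equiv.apply_symm_apply]
      apply Fin.ext; simp
    · show (if h : ((if h : (j:ℕ) < n then _ else j : Fin l) : ℕ) < n then _ else _) = j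
      simp only [dif_neg h]

lemma permExt_castLE {n l : ℕ} (hnl : n ≤ l) (π : Equiv.Perm (Fin n)) (i : Fin n) :
    permExt hnl π (Fin.castLE hnl i) = Fin.castLE hnl (π i) := by
  show (if h : ((Fin.castLE hnl i : Fin l) : ℕ) < n then _ else _) = _
  have h : ((Fin.castLE hnl i : Fin l) : ℕ) < n := i.isLt
  rw [dif_pos h]
  congr 1

/-! ### The urn measure -/

noncomputable def W (κ : Measure ℕ) (l : ℕ) (f : Fin l → Bool) : ℝ≥0∞ :=
  κ {ones f} * ((l.choose (ones f) : ℝ≥0∞))⁻¹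

noncomputable def urn (κ : Measure ℕ) (l : ℕ) : Measure (Fin l → Bool) :=
  ∑ f : Fin l → Bool, W κ l f • Measure.dirac f

lemma urn_singleton (κ : Measure ℕ) (l : ℕ) (g : Fin l → Bool) :
    urn κ l {g} = W κ l g := by
  classical
  rw [urn, Measure.finset_sum_apply]
  have : ∀ f : Fin l → Bool, (W κ l f • Measure.dirac f) {g}
      = if f = g then W κ l f else 0 := by
    intro f
    rw [Measure.smul_apply, Measure.dirac_apply, smul_eq_mul]
    by_cases h : f = g
    · simp [h, Set.indicator_apply]
    · simp [Set.indicator_apply, h]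
  rw [Finset.sum_congr rfl fun f _ => this f]
  simp

lemma fiber_sum (κ : Measure ℕ) (l m' : ℕ) (hm' : m' ≤ l) :
    ∑ f ∈ Finset.univ.filter (fun f : Fin l → Bool => ones f = m'), urn κ l {f}
      = κ {m'} := by
  classical
  have : ∀ f ∈ Finset.univ.filter (fun f : Fin l → Bool => ones f = m'),
      urn κ l {f} = κ {m'} * ((l.choose m' : ℝ≥0∞))⁻¹ := by
    intro f hf
    rw [urn_singleton, W, (Finset.mem_filter.1 hf).2]
  rw [Finset.sum_congr rfl this, Finset.sum_const, card_ones_level, nsmul_eq_mul]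
  have hC0 : ((l.choose m' : ℕ) : ℝ≥0∞) ≠ 0 := by
    exact_mod_cast (Nat.choose_pos hm').ne'
  rw [mul_comm (κ {m'}), ← mul_assoc,
    ENNReal.mul_inv_cancel hC0 (ENNReal.natCast_ne_top _), one_mul]

lemma urn_level (κ : Measure ℕ) (l m' : ℕ) (hm' : m' ≤ l) :
    urn κ l {f : Fin l → Bool | ones f = m'} = κ {m'} := by
  classical
  have hset : {f : Fin l → Bool | ones f = m'}
      = ↑(Finset.univ.filter (fun f : Fin l → Bool => ones f = m')) := by
    ext f; simp
  rw [hset, meas_finset_sum, fiber_sum κ l m' hm']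

lemma urn_exch (κ : Measure ℕ) (l : ℕ) (π : Equiv.Perm (Fin l)) :
    Measure.map (fun f => f ∘ π) (urn κ l) = urn κ l := by
  rw [Measure.ext_iff_singleton]
  intro g
  rw [Measure.map_apply (measurable_of_countable _) (measurableSet_singleton g)]
  have : (fun f : Fin l → Bool => f ∘ π) ⁻¹' {g} = {g ∘ π.symm} := by
    ext f
    simp only [Set.mem_preimage, Set.mem_singleton_iff]
    constructor
    · rintro rfl; funext i; simp
    · rintro rfl; funext i; simp
  rw [this, urn_singleton, urn_singleton, W, W, ones_comp_perm]

lemma urn_univ (κ : Measure ℕ) [IsProbabilityMeasure κ] (l : ℕ)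
    (h0 : ∀ m, l < m → κ {m} = 0) : urn κ l Set.univ = 1 := by
  classical
  have h1 : urn κ l Set.univ = ∑ f : Fin l → Bool, urn κ l {f} := by
    rw [← Finset.coe_univ, meas_finset_sum]
  rw [h1, ← Finset.sum_fiberwise_of_maps_to (g := fun f : Fin l → Bool => ones f)
    (t := Finset.range (l + 1)) (fun f _ => Finset.mem_range.2 (Nat.lt_succ_of_le (ones_le f)))]
  have h2 : ∀ m' ∈ Finset.range (l + 1),
      (∑ f ∈ Finset.univ.filter (fun f : Fin l → Bool => ones f = m'), urn κ l {f}) = κ {m'} :=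
    fun m' hm' => fiber_sum κ l m' (Nat.lt_succ_iff.1 (Finset.mem_range.1 hm'))
  rw [Finset.sum_congr rfl h2]
  have h3 : (Set.univ : Set ℕ) = ⋃ m, {m} := by
    simp [Set.iUnion_of_singleton]
  have h4 : κ Set.univ = ∑' m : ℕ, κ {m} := by
    rw [h3, measure_iUnion (fun a b hab => by simp [Function.onFun, hab])
      (fun m => measurableSet_singleton m)]
  have h5 : (∑' m : ℕ, κ {m}) = ∑ m ∈ Finset.range (l + 1), κ {m} :=
    tsum_eq_sum (fun m hm => h0 m (Nat.lt_of_succ_le (le_of_not_gt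
      (fun hc => hm (Finset.mem_range.2 hc)))))
  rw [← h5, ← h4, measure_univ]

/-! ### Conversion lemmas -/

lemma map_res_Aset {n l : ℕ} (hnl : n ≤ l) (ν : Measure (Fin l → Bool)) {k : ℕ} (hk : k ≤ n) :
    Measure.map (fun f (i : Fin n) => f (Fin.castLE hnl i)) ν (Aset n k) = ν (Aset l k) := by
  rw [Measure.map_apply (measurable_of_countable _) (Set.toFinite _).measurableSet]
  congr 1
  ext f
  simp only [Set.mem_preimage, Aset, Set.mem_setOf_eq]
  constructor
  · intro h j hj
    have h2 := h ⟨(j : ℕ), lt_of_lt_of_le hj hk⟩ hj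
    have : Fin.castLE hnl ⟨(j : ℕ), lt_of_lt_of_le hj hk⟩ = j := by
      apply Fin.ext; rfl
    rwa [this] at h2
  · intro h i hi
    exact h (Fin.castLE hnl i) hi

lemma moment_real {l k : ℕ} (hkl : k ≤ l) (x : ℝ≥0∞) (c : ℕ → ℝ≥0∞)
    (hc : ∀ m' ∈ Finset.range (l + 1), c m' ≠ ⊤)
    (hE : x * (l.descFactorial k : ℝ≥0∞)
      = ∑ m' ∈ Finset.range (l + 1), c m' * (m'.descFactorial k : ℝ≥0∞)) :
    x.toReal = (∑ m' ∈ Finset.range (l + 1), (c m').toReal * (m'.descFactorial k : ℝ))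
      / (l.descFactorial k : ℝ) := by
  have hL : (l.descFactorial k : ℝ) ≠ 0 := by
    have : l.descFactorial k ≠ 0 := by
      rw [Ne, Nat.descFactorial_eq_zero_iff_lt]
      omega
    exact_mod_cast this
  rw [eq_div_iff hL]
  have := congrArg ENNReal.toReal hE
  rw [ENNReal.toReal_mul, ENNReal.toReal_natCast] at this
  rw [this, ENNReal.toReal_sum (fun m' hm' => ENNReal.mul_ne_top (hc m' hm')
    (ENNReal.natCast_ne_top _))]
  exact Finset.sum_congr rfl fun m' _ => by rw [ENNReal.toReal_mul, ENNReal.toReal_natCast]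

lemma tsum_bridge {l : ℕ} (k : ℕ) (κ : Measure ℕ) (h0 : ∀ m, l < m → κ {m} = 0) :
    (∑' m : ℕ, (κ {m}).toReal * (m.descFactorial k : ℝ))
      = ∑ m' ∈ Finset.range (l + 1), (κ {m'}).toReal * (m'.descFactorial k : ℝ) := by
  refine tsum_eq_sum fun m hm => ?_
  have hlm : l < m := by
    by_contra hc
    exact hm (Finset.mem_range.2 (by omega))
  rw [h0 m hlm, ENNReal.toReal_zero, zero_mul]

end DFX

theorem stmt_0 (n l : ℕ) (hn : 1 ≤ n) (hnl : n ≤ l)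
    (μ : Measure (Fin n → Bool)) [IsProbabilityMeasure μ]
    (hexch : ∀ π : Equiv.Perm (Fin n), Measure.map (fun f => f ∘ π) μ = μ) :
    (∃ ν : Measure (Fin l → Bool), IsProbabilityMeasure ν ∧
        (∀ π : Equiv.Perm (Fin l), Measure.map (fun f => f ∘ π) ν = ν) ∧
        Measure.map (fun f (i : Fin n) => f (Fin.castLE hnl i)) ν = μ)
      ↔ (∃ κ : Measure ℕ, IsProbabilityMeasure κ ∧ (∀ m, l < m → κ {m} = 0) ∧
          ∀ k, 1 ≤ k → k ≤ n →
            (μ {f | ∀ i : Fin n, (i : ℕ) < k → f i = true}).toReal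
              = (∑' m : ℕ, (κ {m}).toReal * (m.descFactorial k : ℝ))
                / (l.descFactorial k : ℝ)) := by
  constructor
  · rintro ⟨ν, hνp, hνexch, hmap⟩
    haveI := hνp
    refine ⟨Measure.map DFX.ones ν,
      Measure.isProbabilityMeasure_map (measurable_of_countable _).aemeasurable, ?_, ?_⟩
    all_goals
      have hvan : ∀ m, l < m → (Measure.map DFX.ones ν) {m} = 0 := by
        intro m hm
        rw [Measure.map_apply (measurable_of_countable _) (measurableSet_singleton m)]
        have he : (DFX.ones ⁻¹' {m} : Set (Fin l → Bool)) = ∅ := by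
          ext f
          simp only [Set.mem_preimage, Set.mem_singleton_iff, Set.mem_empty_iff_false, iff_false]
          intro hc
          exact absurd (hc ▸ DFX.ones_le f) (not_le.2 hm)
        rw [he, measure_empty]
    · exact hvan
    intro k hk1 hkn
    have hkl : k ≤ l := hkn.trans hnl
    have hlevel : ∀ m', (Measure.map DFX.ones ν) {m'} = ν {f : Fin l → Bool | DFX.ones f = m'} := by
      intro m'
      rw [Measure.map_apply (measurable_of_countable _) (measurableSet_singleton m')]
      rfl
    have hμA : μ (DFX.Aset n k) = ν (DFX.Aset l k) := by
      rw [← hmap]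
      exact DFX.map_res_Aset hnl ν hkn
    rw [DFX.tsum_bridge k _ hvan]
    have hE : μ (DFX.Aset n k) * (l.descFactorial k : ENNReal)
        = ∑ m' ∈ Finset.range (l + 1),
            (Measure.map DFX.ones ν) {m'} * (m'.descFactorial k : ENNReal) := by
      rw [hμA, DFX.moment_group ν hνexch hkl]
      exact Finset.sum_congr rfl fun m' _ => by rw [hlevel m']
    exact DFX.moment_real hkl (μ (DFX.Aset n k)) _ (fun m' _ => measure_ne_top _ _) hE
  · rintro ⟨κ, hκp, h0, hmom⟩
    haveI := hκp
    haveI hνp : IsProbabilityMeasure (DFX.urn κ l) := ⟨DFX.urn_univ κ l h0⟩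
    refine ⟨DFX.urn κ l, hνp, DFX.urn_exch κ l, ?_⟩
    haveI : IsProbabilityMeasure
        (Measure.map (fun f (i : Fin n) => f (Fin.castLE hnl i)) (DFX.urn κ l)) :=
      Measure.isProbabilityMeasure_map (measurable_of_countable _).aemeasurable
    have hexch' : ∀ π : Equiv.Perm (Fin n),
        Measure.map (fun f => f ∘ π)
          (Measure.map (fun f (i : Fin n) => f (Fin.castLE hnl i)) (DFX.urn κ l))
        = Measure.map (fun f (i : Fin n) => f (Fin.castLE hnl i)) (DFX.urn κ l) := by
      intro π
      rw [Measure.map_map (measurable_of_countable _) (measurable_of_countable _)]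
      have hfun : ((fun f : Fin n → Bool => f ∘ π) ∘ fun f (i : Fin n) => f (Fin.castLE hnl i))
          = (fun f (i : Fin n) => f (Fin.castLE hnl i))
            ∘ (fun f => f ∘ (DFX.permExt hnl π)) := by
        funext f
        funext i
        simp only [Function.comp]
        rw [DFX.permExt_castLE]
      rw [hfun, ← Measure.map_map (measurable_of_countable _) (measurable_of_countable _),
        DFX.urn_exch κ l (DFX.permExt hnl π)]
    apply DFX.exch_unique _ μ hexch' hexch
    intro k hk
    rcases Nat.eq_zero_or_pos k with rfl | hk1
    · have : DFX.Aset n 0 = Set.univ := by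
        ext f; simp [DFX.Aset]
      rw [this, measure_univ, measure_univ]
    have hkl : k ≤ l := hk.trans hnl
    have hμ'A : Measure.map (fun f (i : Fin n) => f (Fin.castLE hnl i)) (DFX.urn κ l)
        (DFX.Aset n k) = DFX.urn κ l (DFX.Aset l k) := DFX.map_res_Aset hnl (DFX.urn κ l) hk
    have hE : Measure.map (fun f (i : Fin n) => f (Fin.castLE hnl i)) (DFX.urn κ l)
          (DFX.Aset n k) * (l.descFactorial k : ENNReal)
        = ∑ m' ∈ Finset.range (l + 1), κ {m'} * (m'.descFactorial k : ENNReal) := by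
      rw [hμ'A, DFX.moment_group (DFX.urn κ l) (DFX.urn_exch κ l) hkl]
      exact Finset.sum_congr rfl fun m' hm' => by
        rw [DFX.urn_level κ l m' (Nat.lt_succ_iff.1 (Finset.mem_range.1 hm'))]
    have h1 := DFX.moment_real hkl _ _ (fun m' _ => measure_ne_top _ _) hE
    have h2 := hmom k hk1 hk
    rw [DFX.tsum_bridge k κ h0] at h2
    have h3 : (Measure.map (fun f (i : Fin n) => f (Fin.castLE hnl i)) (DFX.urn κ l)
        (DFX.Aset n k)).toReal = (μ (DFX.Aset n k)).toReal := h1.trans h2.symm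
    exact (ENNReal.toReal_eq_toReal_iff' (measure_ne_top _ _) (measure_ne_top _ _)).1 h3
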